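/- Let Π be a Hermitian operator with 0 ≤ Π ≤ I, and let ρ, σ be density matrices on the same space. Define C(ρ) = 1 − Tr[Π (ρ⊗ρ)]. Then |C(ρ) − C(σ)| ≤ ‖ρ − σ‖₁. -/

import Mathlib

open Matrix Kronecker
open scoped ComplexOrder
open scoped MatrixOrder

/-- Trace norm of a matrix: sum of singular values, i.e. sum of square roots of
eigenvalues of `Aᴴ * A`. -/
noncomputable def traceNorm {m : Type*} [Fintype m] [DecidableEq m] (A : Matrix m m ℂ) : ℝ :=
  ∑ i, Real.sqrt ((Matrix.isHermitian_conjTranspose_mul_self A).eigenvalues i)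

section aux

variable {n : Type*} [Fintype n] [DecidableEq n]

lemma unitary_conj_trace (U : Matrix.unitaryGroup n ℂ) (D : Matrix n n ℂ) :
    ((U : Matrix n n ℂ) * D * star (U : Matrix n n ℂ)).trace = D.trace := by
  rw [Matrix.trace_mul_cycle, Matrix.UnitaryGroup.star_mul_self, one_mul]

lemma unitary_conj_mul (U : Matrix.unitaryGroup n ℂ) (D E : Matrix n n ℂ) :
    ((U : Matrix n n ℂ) * D * star (U : Matrix n n ℂ)) *
      ((U : Matrix n n ℂ) * E * star (U : Matrix n n ℂ)) =
      (U : Matrix n n ℂ) * (D * E) * star (U : Matrix n n ℂ) := by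
  have h : star (U : Matrix n n ℂ) * (U : Matrix n n ℂ) = 1 :=
    Matrix.UnitaryGroup.star_mul_self U
  calc ((U : Matrix n n ℂ) * D * star (U : Matrix n n ℂ)) *
      ((U : Matrix n n ℂ) * E * star (U : Matrix n n ℂ))
      = (U : Matrix n n ℂ) * D * ((star (U : Matrix n n ℂ) * (U : Matrix n n ℂ)) *
        (E * star (U : Matrix n n ℂ))) := by
        simp only [Matrix.mul_assoc]
    _ = (U : Matrix n n ℂ) * (D * E) * star (U : Matrix n n ℂ) := by
        rw [h, one_mul]; simp only [Matrix.mul_assoc]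

lemma conjTranspose_kron {p : Type*} [Fintype p] [DecidableEq p]
    (A : Matrix n n ℂ) (B : Matrix p p ℂ) : (A ⊗ₖ B)ᴴ = Aᴴ ⊗ₖ Bᴴ := by
  ext ⟨i, j⟩ ⟨k, l⟩
  simp [Matrix.conjTranspose_apply, Matrix.kroneckerMap_apply, mul_comm]

lemma posSemidef_kron {p : Type*} [Fintype p] [DecidableEq p]
    {A : Matrix n n ℂ} {B : Matrix p p ℂ} (hA : A.PosSemidef) (hB : B.PosSemidef) :
    (A ⊗ₖ B).PosSemidef := by
  obtain ⟨C, rfl⟩ := CStarAlgebra.nonneg_iff_eq_star_mul_self.mp hA.nonneg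
  obtain ⟨D, rfl⟩ := CStarAlgebra.nonneg_iff_eq_star_mul_self.mp hB.nonneg
  rw [Matrix.star_eq_conjTranspose, Matrix.star_eq_conjTranspose]
  rw [Matrix.mul_kronecker_mul, ← conjTranspose_kron]
  exact Matrix.posSemidef_conjTranspose_mul_self _

lemma trace_nonneg_of_posSemidef {A : Matrix n n ℂ} (hA : A.PosSemidef) :
    0 ≤ A.trace := by
  rw [Matrix.trace]
  refine Finset.sum_nonneg fun i _ => ?_
  exact hA.diag_nonneg

lemma trace_mul_nonneg {P A : Matrix n n ℂ} (hP : P.PosSemidef) (hA : A.PosSemidef) :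
    0 ≤ (P * A).trace := by
  obtain ⟨B, rfl⟩ := CStarAlgebra.nonneg_iff_eq_star_mul_self.mp hA.nonneg
  rw [Matrix.star_eq_conjTranspose]
  have h1 : (P * (Bᴴ * B)).trace = (B * P * Bᴴ).trace := by
    rw [← Matrix.mul_assoc, Matrix.trace_mul_cycle]
  rw [h1]
  exact trace_nonneg_of_posSemidef (hP.mul_mul_conjTranspose_same B)

lemma trace_mul_le {P A : Matrix n n ℂ} (hP1 : (1 - P).PosSemidef) (hA : A.PosSemidef) :
    (P * A).trace ≤ A.trace := by
  have h := trace_mul_nonneg hP1 hA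
  rw [Matrix.sub_mul, one_mul, Matrix.trace_sub, sub_nonneg] at h
  exact h

lemma sub_kron {p : Type*} [Fintype p] [DecidableEq p]
    (A B : Matrix n n ℂ) (C : Matrix p p ℂ) : (A - B) ⊗ₖ C = A ⊗ₖ C - B ⊗ₖ C := by
  ext ⟨i, j⟩ ⟨k, l⟩
  simp [Matrix.kroneckerMap_apply, sub_mul]

lemma kron_sub {p : Type*} [Fintype p] [DecidableEq p]
    (A : Matrix n n ℂ) (B C : Matrix p p ℂ) : A ⊗ₖ (B - C) = A ⊗ₖ B - A ⊗ₖ C := by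
  ext ⟨i, j⟩ ⟨k, l⟩
  simp [Matrix.kroneckerMap_apply, mul_sub]

lemma abs_eq_max_add (a : ℝ) : |a| = max a 0 + max (-a) 0 := by
  rcases le_total 0 a with h | h
  · rw [abs_of_nonneg h, max_eq_left h, max_eq_right (neg_nonpos.mpr h), add_zero]
  · rw [abs_of_nonpos h, max_eq_right h, max_eq_left (neg_nonneg.mpr h), zero_add]

end aux

theorem ce_trace_norm_continuity {m : Type*} [Fintype m] [DecidableEq m]
    (P : Matrix (m × m) (m × m) ℂ) (hP : P.PosSemidef) (hP1 : (1 - P).PosSemidef)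
    (ρ σ : Matrix m m ℂ) (hρ : ρ.PosSemidef) (hρ1 : ρ.trace = 1)
    (hσ : σ.PosSemidef) (hσ1 : σ.trace = 1) :
    ‖(1 - (P * (ρ ⊗ₖ ρ)).trace) - (1 - (P * (σ ⊗ₖ σ)).trace)‖ ≤
      traceNorm (ρ - σ) := by
  classical
  set Δ : Matrix m m ℂ := ρ - σ with hΔdef
  have hΔ : Δ.IsHermitian := hρ.1.sub hσ.1
  set U := hΔ.eigenvectorUnitary with hU
  set lam := hΔ.eigenvalues with hlam
  -- positive and negative parts
  set Δp : Matrix m m ℂ :=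
    (U : Matrix m m ℂ) * Matrix.diagonal (fun i => ((max (lam i) 0 : ℝ) : ℂ)) * star (U : Matrix m m ℂ)
    with hΔp
  set Δm : Matrix m m ℂ :=
    (U : Matrix m m ℂ) * Matrix.diagonal (fun i => ((max (-lam i) 0 : ℝ) : ℂ)) * star (U : Matrix m m ℂ)
    with hΔm
  have hΔpPSD : Δp.PosSemidef := by
    refine (Matrix.posSemidef_diagonal_iff.mpr fun i => ?_).mul_mul_conjTranspose_same _
    exact Complex.zero_le_real.mpr (le_max_right _ _)
  have hΔmPSD : Δm.PosSemidef := by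
    refine (Matrix.posSemidef_diagonal_iff.mpr fun i => ?_).mul_mul_conjTranspose_same _
    exact Complex.zero_le_real.mpr (le_max_right _ _)
  have hspec : Δ = (U : Matrix m m ℂ) * Matrix.diagonal (RCLike.ofReal ∘ lam) *
      star (U : Matrix m m ℂ) := hΔ.spectral_theorem
  have hsub : Δp - Δm = Δ := by
    rw [hΔp, hΔm, hspec, ← Matrix.sub_mul, ← Matrix.mul_sub, Matrix.diagonal_sub]
    have hfun : (fun i => ((max (lam i) 0 : ℝ) : ℂ) - ((max (-lam i) 0 : ℝ) : ℂ)) =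
        (RCLike.ofReal ∘ lam : m → ℂ) := by
      funext i
      rw [← Complex.ofReal_sub, max_zero_sub_max_neg_zero_eq_self]
      rfl
    rw [hfun]
  -- traces of parts
  set a : ℝ := ∑ i, max (lam i) 0 with ha
  set b : ℝ := ∑ i, max (-lam i) 0 with hb
  have htrp : Δp.trace = (a : ℂ) := by
    rw [hΔp, unitary_conj_trace, Matrix.trace_diagonal]
    norm_cast
  have htrm : Δm.trace = (b : ℂ) := by
    rw [hΔm, unitary_conj_trace, Matrix.trace_diagonal]
    norm_cast
  have htrΔ : Δ.trace = 0 := by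
    rw [hΔdef, Matrix.trace_sub, hρ1, hσ1, sub_self]
  have hab : a = b := by
    have : (a : ℂ) - (b : ℂ) = 0 := by
      rw [← htrp, ← htrm, ← Matrix.trace_sub, hsub, htrΔ]
    have := sub_eq_zero.mp this
    exact_mod_cast this
  -- trace norm equals a + b
  have htn : traceNorm Δ = a + b := by
    -- absolute value matrix
    set B : Matrix m m ℂ :=
      (U : Matrix m m ℂ) * Matrix.diagonal (fun i => ((|lam i| : ℝ) : ℂ)) * star (U : Matrix m m ℂ)
      with hB
    have hBPSD : B.PosSemidef := by
      refine (Matrix.posSemidef_diagonal_iff.mpr fun i => ?_).mul_mul_conjTranspose_same _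
      exact Complex.zero_le_real.mpr (abs_nonneg _)
    have hM : (Δᴴ * Δ).PosSemidef := Matrix.posSemidef_conjTranspose_mul_self Δ
    have hBsq : B ^ 2 = Δᴴ * Δ := by
      rw [hΔ.eq]
      rw [pow_two, hB, unitary_conj_mul, Matrix.diagonal_mul_diagonal]
      conv_rhs => rw [hspec, unitary_conj_mul, Matrix.diagonal_mul_diagonal]
      have hfun : (fun i => ((|lam i| : ℝ) : ℂ) * ((|lam i| : ℝ) : ℂ)) =
          (fun i => (RCLike.ofReal ∘ lam : m → ℂ) i * (RCLike.ofReal ∘ lam : m → ℂ) i) := by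
        funext i
        rw [show ((RCLike.ofReal ∘ lam : m → ℂ) i) = ((lam i : ℝ) : ℂ) from rfl,
          ← Complex.ofReal_mul, ← Complex.ofReal_mul, abs_mul_abs_self]
      rw [hfun]
    have hBeq : B = CFC.sqrt (Δᴴ * Δ) := by
      rw [eq_comm, CFC.sqrt_eq_iff _ _ hM.nonneg hBPSD.nonneg, ← sq, hBsq]
    have htrB : B.trace = ((∑ i, |lam i| : ℝ) : ℂ) := by
      rw [hB, unitary_conj_trace, Matrix.trace_diagonal]
      push_cast
      rfl
    have htrS : (CFC.sqrt (Δᴴ * Δ)).trace = ((traceNorm Δ : ℝ) : ℂ) := by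
      rw [CFC.sqrt_eq_cfc, cfc_nnreal_eq_real _ _ hM.nonneg, hM.1.cfc_eq, Matrix.IsHermitian.cfc,
        Unitary.conjStarAlgAut_apply, unitary_conj_trace, Matrix.trace_diagonal, traceNorm]
      push_cast
      refine Finset.sum_congr rfl fun i _ => ?_
      simp [Real.coe_toNNReal _ (hM.eigenvalues_nonneg i)]
      rw [max_eq_left (hM.eigenvalues_nonneg i)]
    have h1 : ((∑ i, |lam i| : ℝ) : ℂ) = ((traceNorm Δ : ℝ) : ℂ) := by
      rw [← htrB, ← htrS, hBeq]
    have h2 : traceNorm Δ = ∑ i, |lam i| := by exact_mod_cast h1.symm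
    rw [h2, ha, hb, ← Finset.sum_add_distrib]
    exact Finset.sum_congr rfl fun i _ => abs_eq_max_add (lam i)
  -- decompose the difference of kronecker products
  have hkron : ρ ⊗ₖ ρ - σ ⊗ₖ σ = (ρ ⊗ₖ Δp - ρ ⊗ₖ Δm) + (Δp ⊗ₖ σ - Δm ⊗ₖ σ) := by
    rw [← kron_sub, ← sub_kron, hsub, hΔdef, kron_sub, sub_kron]
    abel
  -- the four trace terms
  have key : (P * (ρ ⊗ₖ ρ)).trace - (P * (σ ⊗ₖ σ)).trace =
      (P * (ρ ⊗ₖ Δp)).trace - (P * (ρ ⊗ₖ Δm)).trace +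
      ((P * (Δp ⊗ₖ σ)).trace - (P * (Δm ⊗ₖ σ)).trace) := by
    have : (P * (ρ ⊗ₖ ρ)).trace - (P * (σ ⊗ₖ σ)).trace =
        (P * (ρ ⊗ₖ ρ - σ ⊗ₖ σ)).trace := by
      rw [Matrix.mul_sub, Matrix.trace_sub]
    rw [this, hkron]
    simp only [Matrix.mul_add, Matrix.mul_sub, Matrix.trace_add, Matrix.trace_sub]
  -- bounds on each term
  have bound : ∀ (K : Matrix (m × m) (m × m) ℂ), K.PosSemidef →
      0 ≤ (P * K).trace ∧ (P * K).trace ≤ K.trace := fun K hK =>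
    ⟨trace_mul_nonneg hP hK, trace_mul_le hP1 hK⟩
  have h1 := bound _ (posSemidef_kron hρ hΔpPSD)
  have h2 := bound _ (posSemidef_kron hρ hΔmPSD)
  have h3 := bound _ (posSemidef_kron hΔpPSD hσ)
  have h4 := bound _ (posSemidef_kron hΔmPSD hσ)
  have htr1 : (ρ ⊗ₖ Δp).trace = (a : ℂ) := by
    rw [Matrix.trace_kronecker, hρ1, one_mul, htrp]
  have htr2 : (ρ ⊗ₖ Δm).trace = (b : ℂ) := by
    rw [Matrix.trace_kronecker, hρ1, one_mul, htrm]
  have htr3 : (Δp ⊗ₖ σ).trace = (a : ℂ) := by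
    rw [Matrix.trace_kronecker, hσ1, mul_one, htrp]
  have htr4 : (Δm ⊗ₖ σ).trace = (b : ℂ) := by
    rw [Matrix.trace_kronecker, hσ1, mul_one, htrm]
  rw [htr1] at h1; rw [htr2] at h2; rw [htr3] at h3; rw [htr4] at h4
  -- extract real parts
  set t1 := (P * (ρ ⊗ₖ Δp)).trace
  set t2 := (P * (ρ ⊗ₖ Δm)).trace
  set t3 := (P * (Δp ⊗ₖ σ)).trace
  set t4 := (P * (Δm ⊗ₖ σ)).trace
  obtain ⟨h1l, h1im⟩ := Complex.le_def.mp h1.1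
  obtain ⟨h1u, -⟩ := Complex.le_def.mp h1.2
  obtain ⟨h2l, h2im⟩ := Complex.le_def.mp h2.1
  obtain ⟨h2u, -⟩ := Complex.le_def.mp h2.2
  obtain ⟨h3l, h3im⟩ := Complex.le_def.mp h3.1
  obtain ⟨h3u, -⟩ := Complex.le_def.mp h3.2
  obtain ⟨h4l, h4im⟩ := Complex.le_def.mp h4.1
  obtain ⟨h4u, -⟩ := Complex.le_def.mp h4.2
  simp only [Complex.zero_re, Complex.zero_im, Complex.ofReal_re, Complex.ofReal_im] at *
  have hz : (1 - (P * (ρ ⊗ₖ ρ)).trace) - (1 - (P * (σ ⊗ₖ σ)).trace) =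
      -(t1 - t2 + (t3 - t4)) := by
    rw [← key]; ring
  rw [hz, norm_neg]
  have hre : (t1 - t2 + (t3 - t4)).re = t1.re - t2.re + (t3.re - t4.re) := by simp
  have him : (t1 - t2 + (t3 - t4)).im = 0 := by simp [← h1im, ← h2im, ← h3im, ← h4im]
  have habs : ‖t1 - t2 + (t3 - t4)‖ = |t1.re - t2.re + (t3.re - t4.re)| := by
    rw [Complex.norm_def, Complex.normSq_apply, him, hre]
    simp [Real.sqrt_mul_self_eq_abs]
  rw [habs, htn]
  rw [abs_le]
  constructor
  · have := hab ▸ h2u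
    nlinarith [h1l, h3l, h2u, h4u]
  · nlinarith [h2l, h4l, h1u, h3u, hab]
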